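/- arXiv:1210.3542 — 2 statements merged into one kernel-verified Lean document; each statement's English description precedes it below -/
import Mathlib

section
/- Let M be a 2×2 complex matrix whose imaginary part (M − M*)/(2i) is positive definite. Then the double integral over (v₁, v₂) ∈ ℝ² of det(Im[(diag(v₁, v₂) − M)^{-1}]) dv₁ dv₂ is at most π². -/
open MeasureTheory Matrix
open scoped ComplexOrder

/-- The imaginary part `(M - M*)/(2i)` of a complex matrix. -/
noncomputable def matIm {n : Type*} [Fintype n] [DecidableEq n]
    (M : Matrix n n ℂ) : Matrix n n ℂ :=
  ((2 * Complex.I)⁻¹) • (M - Mᴴ)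

open Real

/- base integral lemmas -/
lemma mnm_shifted_integrable (r s₀ : ℝ) (hr : r ≠ 0) :
    Integrable (fun x : ℝ => (1 + (r * (x - s₀)) ^ 2)⁻¹) := by
  have h1 : Integrable (fun x : ℝ => (1 + (r * x) ^ 2)⁻¹) :=
    integrable_inv_one_add_sq.comp_mul_left' hr
  simpa using h1.comp_sub_right s₀

lemma mnm_shifted_integral (r s₀ : ℝ) (hr : 0 < r) :
    ∫ x : ℝ, (1 + (r * (x - s₀)) ^ 2)⁻¹ = π / r := by
  have h2 : ∫ x : ℝ, (1 + (r * (x - s₀)) ^ 2)⁻¹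
      = ∫ x : ℝ, (1 + (r * x) ^ 2)⁻¹ :=
    integral_sub_right_eq_self (fun x => (1 + (r * x) ^ 2)⁻¹) s₀
  rw [h2, Measure.integral_comp_mul_left (fun x => (1 + x ^ 2)⁻¹) r,
    integral_univ_inv_one_add_sq, abs_of_pos (inv_pos.2 hr), smul_eq_mul]
  ring

lemma mnm_quad_eq (α m s₀ : ℝ) (hα : 0 < α) (hm : 0 < m) :
    ∀ x : ℝ, (α * (x - s₀) ^ 2 + m)⁻¹
      = m⁻¹ * (1 + (Real.sqrt (α / m) * (x - s₀)) ^ 2)⁻¹ := by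
  intro x
  have h : (Real.sqrt (α / m)) ^ 2 = α / m := Real.sq_sqrt (by positivity)
  rw [mul_pow, h, ← mul_inv]
  congr 1
  field_simp
  ring

lemma mnm_quad_integrable (α m s₀ : ℝ) (hα : 0 < α) (hm : 0 < m) :
    Integrable (fun x : ℝ => (α * (x - s₀) ^ 2 + m)⁻¹) := by
  have hr : Real.sqrt (α / m) ≠ 0 := by positivity
  simpa only [mnm_quad_eq α m s₀ hα hm] using
    (mnm_shifted_integrable _ s₀ hr).const_mul m⁻¹

lemma mnm_quad_integral (α m s₀ : ℝ) (hα : 0 < α) (hm : 0 < m) :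
    ∫ x : ℝ, (α * (x - s₀) ^ 2 + m)⁻¹ = π / Real.sqrt (α * m) := by
  have hr : (0:ℝ) < Real.sqrt (α / m) := by positivity
  simp only [mnm_quad_eq α m s₀ hα hm]
  rw [integral_const_mul, mnm_shifted_integral _ s₀ hr]
  have h1 : Real.sqrt (α/m) = Real.sqrt α / Real.sqrt m := Real.sqrt_div hα.le m
  have h2 : Real.sqrt (α*m) = Real.sqrt α * Real.sqrt m := Real.sqrt_mul hα.le m
  have hsm : (0:ℝ) < Real.sqrt m := by positivity
  have hsa : (0:ℝ) < Real.sqrt α := by positivity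
  have hmm : Real.sqrt m * Real.sqrt m = m := Real.mul_self_sqrt hm.le
  rw [h1, h2]
  field_simp
  linear_combination hmm

/- matrix lemmas -/
lemma mnm_matIm_inv_eq (A M : Matrix (Fin 2) (Fin 2) ℂ) (hA : IsUnit A.det)
    (h : Aᴴ - A = M - Mᴴ) :
    matIm A⁻¹ = A⁻¹ * matIm M * (A⁻¹)ᴴ := by
  have h1 : (A⁻¹)ᴴ = (Aᴴ)⁻¹ := conjTranspose_nonsing_inv A
  have hAH : IsUnit (Aᴴ).det := by rw [det_conjTranspose]; exact hA.star
  unfold matIm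
  rw [Matrix.mul_smul, Matrix.smul_mul]
  congr 1
  rw [h1, ← h, Matrix.mul_sub, Matrix.nonsing_inv_mul A hA, Matrix.sub_mul, one_mul,
    Matrix.mul_assoc, Matrix.mul_nonsing_inv (Aᴴ) hAH, Matrix.mul_one]

lemma mnm_det_matIm_inv (A M : Matrix (Fin 2) (Fin 2) ℂ) (hA : IsUnit A.det) (D : ℝ)
    (h : Aᴴ - A = M - Mᴴ) (hD : (matIm M).det = (D : ℂ)) :
    ((matIm A⁻¹).det).re = D / Complex.normSq A.det := by
  rw [mnm_matIm_inv_eq A M hA h, det_mul, det_mul, det_conjTranspose, hD, det_nonsing_inv,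
    Ring.inverse_eq_inv]
  have : A.det⁻¹ * (D:ℂ) * star (A.det⁻¹) = ((D * Complex.normSq A.det⁻¹ : ℝ) : ℂ) := by
    rw [mul_comm, ← mul_assoc]
    rw [show star A.det⁻¹ * A.det⁻¹ = (Complex.normSq A.det⁻¹ : ℂ) by
      rw [← Complex.mul_conj, mul_comm]; rfl]
    push_cast
    ring
  rw [this, Complex.ofReal_re, map_inv₀ Complex.normSq A.det, div_eq_mul_inv]

lemma mnm_det_matIm (M : Matrix (Fin 2) (Fin 2) ℂ) :
    (matIm M).det = (((M 0 0).im * (M 1 1).im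
      - (Complex.normSq (M 0 1) + Complex.normSq (M 1 0)
          - 2*((M 0 1)*(M 1 0)).re)/4 : ℝ) : ℂ) := by
  simp only [matIm, det_fin_two, Matrix.smul_apply, Matrix.sub_apply, conjTranspose_apply, smul_eq_mul]
  rw [Complex.ext_iff]
  constructor <;>
  · simp [Complex.normSq_apply, Complex.div_re, Complex.div_im]
    ring_nf


lemma mnm_NQ (a d bc : ℂ) (v₂ : ℝ) (hN : Complex.normSq ((v₂:ℂ)-d) = (v₂-d.re)^2 + d.im^2)
    (hNe : ((v₂-d.re)^2 + d.im^2) ≠ 0) :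
    Complex.normSq ((v₂:ℂ)-d) * (a + bc/((v₂:ℂ)-d)).im
      = a.im*(v₂-d.re)^2 + bc.im*(v₂-d.re) + (a.im*d.im^2 + bc.re*d.im) := by
  simp only [Complex.add_im, Complex.div_im, Complex.sub_re, Complex.sub_im,
    Complex.ofReal_re, Complex.ofReal_im, hN]
  field_simp
  ring

set_option maxHeartbeats 2000000 in
/-- Minami's two-by-two lemma: if `Im M > 0`, then
`∫∫ det Im[(diag(v₁,v₂) - M)⁻¹] dv₁ dv₂ ≤ π²`. -/
theorem minami_two_by_two_lemma (M : Matrix (Fin 2) (Fin 2) ℂ)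
    (hM : (matIm M).PosDef) :
    ∫ v : ℝ × ℝ,
        (Matrix.det (matIm ((Matrix.diagonal ![(v.1 : ℂ), (v.2 : ℂ)] - M)⁻¹))).re
      ≤ Real.pi ^ 2 := by
  set a := M 0 0 with ha
  set b := M 0 1 with hb
  set c := M 1 0 with hc
  set d := M 1 1 with hd
  set α := a.im with hαdef
  set δ := d.im with hδdef
  set u := (b*c).re with hu
  set w := (b*c).im with hw
  set p := Complex.normSq b with hpdef
  set q := Complex.normSq c with hqdef
  set D : ℝ := α*δ - (p + q - 2*u)/4 with hDdef
  -- basic positivity facts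
  have hα : 0 < α := by
    have h := hM.dotProduct_mulVec_pos (x := ![1,0]) (by intro h; exact absurd (congrFun h 0) (by norm_num))
    simpa [matIm, dotProduct, mulVec, Fin.sum_univ_two, Complex.lt_def] using h
  have hδ : 0 < δ := by
    have h := hM.dotProduct_mulVec_pos (x := ![0,1]) (by intro h; exact absurd (congrFun h 1) (by norm_num))
    simpa [matIm, dotProduct, mulVec, Fin.sum_univ_two, Complex.lt_def] using h
  have hdet : (matIm M).det = (D:ℂ) := mnm_det_matIm M
  have hD : 0 < D := by
    have h := hM.det_pos
    rw [hdet] at h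
    exact_mod_cast h
  have hpq : u^2 + w^2 = p * q := by
    rw [show u^2+w^2 = Complex.normSq (b*c) by rw [Complex.normSq_apply]; ring,
      Complex.normSq_mul]
  have hp : 0 ≤ p := Complex.normSq_nonneg b
  have hq : 0 ≤ q := Complex.normSq_nonneg c
  set k : ℝ := α*δ^2 + u*δ with hk
  set m : ℝ := k - w^2/(4*α) with hm'
  have hαm : D^2 ≤ α*m := by
    have hαm' : α*m = α^2*δ^2 + α*δ*u - w^2/4 := by
      rw [hm', hk]; field_simp
    rw [hαm']
    have h4D : 0 < 2*(2*α*δ + u) - (p+q) := by rw [hDdef] at hD; linarith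
    nlinarith [mul_nonneg h4D.le (add_nonneg hp hq), sq_nonneg (p-q)]
  have hm : 0 < m := by nlinarith [pow_pos hD 2]
  set t₀ : ℝ := d.re - w/(2*α) with ht₀
  have Qid : ∀ v₂:ℝ, α*(v₂-d.re)^2 + w*(v₂-d.re) + k = α*(v₂ - t₀)^2 + m := by
    intro v₂
    rw [ht₀, hm', hk]
    field_simp
    ring
  have he : ∀ v₂:ℝ, ((v₂:ℂ) - d) ≠ 0 := by
    intro v₂ h
    have := congrArg Complex.im h
    simp [hδdef] at this
    exact hδ.ne' this
  set z : ℝ → ℂ := fun v₂ => a + b*c/((v₂:ℂ)-d) with hz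
  have hNval : ∀ v₂:ℝ, Complex.normSq ((v₂:ℂ)-d) = (v₂-d.re)^2 + δ^2 := by
    intro v₂
    rw [Complex.normSq_apply]
    simp [hδdef]
    ring
  have hNQ : ∀ v₂:ℝ, Complex.normSq ((v₂:ℂ)-d) * (z v₂).im = α*(v₂-t₀)^2 + m := by
    intro v₂
    have hNe : ((v₂ - d.re)^2 + δ^2) ≠ 0 := by positivity
    rw [← Qid v₂, hz]
    rw [mnm_NQ a d (b*c) v₂ (hNval v₂) hNe]
  have hzim : ∀ v₂:ℝ, 0 < (z v₂).im := by
    intro v₂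
    have h1 : 0 < Complex.normSq ((v₂:ℂ)-d) := Complex.normSq_pos.2 (he v₂)
    have h2 : 0 < α*(v₂-t₀)^2+m := by positivity
    nlinarith [hNQ v₂]
  have hfact : ∀ (v₁ v₂ : ℝ), ((v₁:ℂ)-a)*((v₂:ℂ)-d) - b*c
      = ((v₂:ℂ)-d) * ((v₁:ℂ) - z v₂) := by
    intro v₁ v₂
    rw [hz]
    field_simp [he v₂]
    ring
  have hPne : ∀ (v₁ v₂ : ℝ), ((v₁:ℂ)-a)*((v₂:ℂ)-d) - b*c ≠ 0 := by
    intro v₁ v₂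
    rw [hfact v₁ v₂]
    refine mul_ne_zero (he v₂) (fun h => ?_)
    have := congrArg Complex.im h
    simp at this
    exact (hzim v₂).ne' this
  have hnormSqP : ∀ (v₁ v₂ : ℝ), Complex.normSq (((v₁:ℂ)-a)*((v₂:ℂ)-d) - b*c)
      = Complex.normSq ((v₂:ℂ)-d) * ((v₁ - (z v₂).re)^2 + (z v₂).im^2) := by
    intro v₁ v₂
    rw [hfact v₁ v₂, Complex.normSq_mul]
    congr 1
    simp [Complex.normSq_apply]
    ring
  -- Step A : pointwise identity
  have key : ∀ v : ℝ×ℝ,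
      (Matrix.det (matIm ((Matrix.diagonal ![(v.1:ℂ),(v.2:ℂ)] - M)⁻¹))).re
      = D / Complex.normSq (((v.1:ℂ)-a)*((v.2:ℂ)-d) - b*c) := by
    intro v
    have hdetA : (Matrix.diagonal ![(v.1:ℂ),(v.2:ℂ)] - M).det
        = ((v.1:ℂ)-a)*((v.2:ℂ)-d) - b*c := by
      rw [det_fin_two]
      simp [Matrix.sub_apply, Matrix.diagonal_apply, ha, hb, hc, hd]
    have hA : IsUnit (Matrix.diagonal ![(v.1:ℂ),(v.2:ℂ)] - M).det := by
      rw [hdetA]; exact (hPne v.1 v.2).isUnit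
    have hstar : star ![(v.1:ℂ),(v.2:ℂ)] = ![(v.1:ℂ),(v.2:ℂ)] := by
      funext i
      fin_cases i <;> simp
    have hh : (Matrix.diagonal ![(v.1:ℂ),(v.2:ℂ)] - M)ᴴ
        - (Matrix.diagonal ![(v.1:ℂ),(v.2:ℂ)] - M) = M - Mᴴ := by
      rw [conjTranspose_sub, diagonal_conjTranspose, hstar, sub_sub_sub_cancel_left]
    rw [mnm_det_matIm_inv _ M hA D hh hdet, hdetA]
  simp only [key]
  -- continuity of the explicit integrand
  have hPcont : Continuous (fun v : ℝ×ℝ => ((v.1:ℂ)-a)*((v.2:ℂ)-d) - b*c) := by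
    fun_prop
  have hcont : Continuous (fun v : ℝ×ℝ =>
      D / Complex.normSq (((v.1:ℂ)-a)*((v.2:ℂ)-d) - b*c)) := by
    apply continuous_const.div (Complex.continuous_normSq.comp hPcont)
    intro v
    simpa using hPne v.1 v.2
  have hGnn : ∀ v : ℝ×ℝ, 0 ≤ D / Complex.normSq (((v.1:ℂ)-a)*((v.2:ℂ)-d) - b*c) := by
    intro v
    have := Complex.normSq_nonneg (((v.1:ℂ)-a)*((v.2:ℂ)-d) - b*c)
    positivity
  rw [integral_eq_lintegral_of_nonneg_ae (ae_of_all _ hGnn) hcont.aestronglyMeasurable]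
  -- the lintegral bound
  have hlint : ∫⁻ v : ℝ×ℝ, ENNReal.ofReal
      (D / Complex.normSq (((v.1:ℂ)-a)*((v.2:ℂ)-d) - b*c)) ≤ ENNReal.ofReal (π^2) := by
    rw [Measure.volume_eq_prod, lintegral_prod_symm
      (fun v : ℝ×ℝ => ENNReal.ofReal (D / Complex.normSq (((v.1:ℂ)-a)*((v.2:ℂ)-d) - b*c)))
      ((ENNReal.measurable_ofReal.comp hcont.measurable).aemeasurable)]
    have inner : ∀ v₂ : ℝ, (∫⁻ v₁ : ℝ, ENNReal.ofReal
        (D / Complex.normSq (((v₁:ℂ)-a)*((v₂:ℂ)-d) - b*c)))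
        = ENNReal.ofReal (D*π*(α*(v₂-t₀)^2+m)⁻¹) := by
      intro v₂
      have hNpos : 0 < Complex.normSq ((v₂:ℂ)-d) := Complex.normSq_pos.2 (he v₂)
      have hGx : ∀ v₁:ℝ, D / Complex.normSq (((v₁:ℂ)-a)*((v₂:ℂ)-d) - b*c)
          = (D / Complex.normSq ((v₂:ℂ)-d))
            * (1*(v₁ - (z v₂).re)^2 + (z v₂).im^2)⁻¹ := by
        intro v₁
        rw [hnormSqP v₁ v₂, one_mul, div_eq_mul_inv, div_eq_mul_inv, mul_inv, mul_assoc]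
      simp only [hGx]
      have hint : Integrable (fun v₁:ℝ => (D / Complex.normSq ((v₂:ℂ)-d))
          * (1*(v₁ - (z v₂).re)^2 + (z v₂).im^2)⁻¹) :=
        (mnm_quad_integrable 1 ((z v₂).im^2) ((z v₂).re) one_pos
          (by have := hzim v₂; positivity)).const_mul _
      rw [← ofReal_integral_eq_lintegral_ofReal hint (ae_of_all _ (fun v₁ => by
        have h1 : (0:ℝ) < 1*(v₁ - (z v₂).re)^2 + (z v₂).im^2 := by
          have := hzim v₂; positivity
        positivity))]
      congr 1
      rw [integral_const_mul, mnm_quad_integral 1 ((z v₂).im^2) ((z v₂).re) one_pos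
        (by have := hzim v₂; positivity), one_mul, Real.sqrt_sq (hzim v₂).le]
      rw [div_mul_div_comm, ← hNQ v₂, div_eq_mul_inv]
    simp only [inner]
    rw [← ofReal_integral_eq_lintegral_ofReal
      ((mnm_quad_integrable α m t₀ hα hm).const_mul (D*π))
      (ae_of_all _ (fun v₂ => by
        have h1 : (0:ℝ) < α*(v₂-t₀)^2+m := by positivity
        simp only [Pi.zero_apply]
        positivity))]
    apply ENNReal.ofReal_le_ofReal
    rw [integral_const_mul, mnm_quad_integral α m t₀ hα hm]
    have hsq : D ≤ Real.sqrt (α*m) := by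
      rw [← Real.sqrt_sq hD.le]
      exact Real.sqrt_le_sqrt hαm
    have hsqpos : 0 < Real.sqrt (α*m) := by positivity
    calc D*π*(π/Real.sqrt (α*m)) = π^2 * (D/Real.sqrt (α*m)) := by ring
      _ ≤ π^2 * 1 := by
          apply mul_le_mul_of_nonneg_left ((div_le_one hsqpos).2 hsq) (by positivity)
      _ = π^2 := mul_one _
  refine le_trans (ENNReal.toReal_mono ENNReal.ofReal_ne_top hlint) ?_
  rw [ENNReal.toReal_ofReal (by positivity : (0:ℝ) ≤ π^2)]
end

section
/- Let H be a self-adjoint operator on ℓ²(Λ) for a finite set Λ, and let x ≠ y in Λ. Let P_x, P_y be the orthogonal projections onto δ_x, δ_y, set Ĥ = H − v_x P_x − v_y P_y for real numbers v_x, v_y, and let z ∈ ℂ with Im z > 0. If the 2×2 matrix Ĝ with entries Ĝ(a,b) = ⟨δ_a, (Ĥ − z)^{-1} δ_b⟩ for a, b ∈ {x,y} is invertible, then the 2×2 matrix g with entries g(a,b) = ⟨δ_a, (H − z)^{-1} δ_b⟩ satisfies g = (diag(v_x, v_y) + Ĝ^{-1})^{-1} (Krein formula). -/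
open Matrix

lemma krein_aux_isUnit_det {Λ : Type*} [Fintype Λ] [DecidableEq Λ]
    (M : Matrix Λ Λ ℂ) (hM : M.IsHermitian) (z : ℂ) (hz : z.im ≠ 0) :
    IsUnit (M - z • 1).det := by
  rw [isUnit_iff_ne_zero]
  intro hdet
  obtain ⟨v, hv, hmv⟩ := (Matrix.exists_mulVec_eq_zero_iff).2 hdet
  have hMv : M *ᵥ v = z • v := by
    rw [Matrix.sub_mulVec, Matrix.smul_mulVec, Matrix.one_mulVec, sub_eq_zero] at hmv
    exact hmv
  set d := star v ⬝ᵥ (M *ᵥ v) with hd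
  have hsd : star d = d := by
    rw [hd]
    conv_rhs => rw [Matrix.star_dotProduct]
    congr 1
    rw [Matrix.star_mulVec, hM.eq, Matrix.dotProduct_mulVec]
  have hr : star v ⬝ᵥ v = ((∑ i, Complex.normSq (v i) : ℝ) : ℂ) := by
    push_cast
    simp [dotProduct, Pi.star_apply, Complex.star_def,
      Complex.normSq_eq_conj_mul_self]
  have h1 : d = z * ((∑ i, Complex.normSq (v i) : ℝ) : ℂ) := by
    rw [hd, hMv, dotProduct_smul, smul_eq_mul, hr]
  have him : d.im = 0 := by
    have := congrArg Complex.im hsd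
    simp only [Complex.star_def, Complex.conj_im] at this
    linarith
  have hrpos : 0 < ∑ i, Complex.normSq (v i) := by
    obtain ⟨i, hi⟩ := Function.ne_iff.1 hv
    exact Finset.sum_pos' (fun j _ => Complex.normSq_nonneg _)
      ⟨i, Finset.mem_univ i, Complex.normSq_pos.mpr hi⟩
  rw [h1] at him
  simp only [Complex.mul_im, Complex.ofReal_re, Complex.ofReal_im, mul_zero, add_zero, zero_add] at him
  rcases mul_eq_zero.1 him with h | h
  · exact hz h
  · exact hrpos.ne' h

lemma krein_aux_std_herm {Λ : Type*} [Fintype Λ] [DecidableEq Λ]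
    (x : Λ) (c : ℝ) : ((c : ℂ) • Matrix.single x x (1 : ℂ)).IsHermitian := by
  show _ᴴ = _
  ext i j
  simp only [Matrix.conjTranspose_apply, Matrix.smul_apply, Matrix.single,
    Matrix.of_apply, smul_eq_mul, Complex.star_def]
  by_cases h1 : x = i <;> by_cases h2 : x = j <;>
    simp [h1, h2, Complex.conj_ofReal] <;> split_ifs <;>
    simp [Complex.conj_ofReal]

/-- Krein formula: for a self-adjoint `H` on `ℓ²(Λ)`, `Λ` finite, distinct sites
`x ≠ y`, `Ĥ = H − v_x P_x − v_y P_y` and `Im z > 0`, if the `2×2` matrix `Ĝ` of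
entries of `(Ĥ − z)⁻¹` at `x,y` is invertible, then the corresponding matrix `g`
of `(H − z)⁻¹` satisfies `g = (diag(v_x,v_y) + Ĝ⁻¹)⁻¹`. -/
theorem krein_formula {Λ : Type*} [Fintype Λ] [DecidableEq Λ]
    (H : Matrix Λ Λ ℂ) (hH : H.IsHermitian)
    (x y : Λ) (hxy : x ≠ y) (vx vy : ℝ) (z : ℂ) (hz : 0 < z.im)
    (Hhat : Matrix Λ Λ ℂ)
    (hHhat : Hhat = H - (vx : ℂ) • Matrix.single x x 1
        - (vy : ℂ) • Matrix.single y y 1)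
    (Ghat g : Matrix (Fin 2) (Fin 2) ℂ)
    (hGhat : Ghat = Matrix.of fun a b => ((Hhat - z • 1)⁻¹) (![x, y] a) (![x, y] b))
    (hg : g = Matrix.of fun a b => ((H - z • 1)⁻¹) (![x, y] a) (![x, y] b))
    (hinv : IsUnit Ghat.det) :
    g = (Matrix.diagonal ![(vx : ℂ), (vy : ℂ)] + Ghat⁻¹)⁻¹ := by
  have hzne : z.im ≠ 0 := ne_of_gt hz
  set A := H - z • (1 : Matrix Λ Λ ℂ) with hA
  set B := Hhat - z • (1 : Matrix Λ Λ ℂ) with hB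
  have hHhatHerm : Hhat.IsHermitian := by
    rw [hHhat]
    exact (hH.sub (krein_aux_std_herm x vx)).sub (krein_aux_std_herm y vy)
  have hAdet : IsUnit A.det := krein_aux_isUnit_det H hH z hzne
  have hBdet : IsUnit B.det := krein_aux_isUnit_det Hhat hHhatHerm z hzne
  have hAB : A - B = (vx : ℂ) • Matrix.single x x 1
      + (vy : ℂ) • Matrix.single y y 1 := by
    rw [hA, hB, hHhat]
    ext i j
    simp only [Matrix.sub_apply, Matrix.add_apply, Matrix.smul_apply, smul_eq_mul]
    ring
  have key : A⁻¹ = B⁻¹ - B⁻¹ * (A - B) * A⁻¹ := by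
    have h1 : B⁻¹ * (A - B) * A⁻¹ = B⁻¹ * (A * A⁻¹) - (B⁻¹ * B) * A⁻¹ := by
      noncomm_ring
    rw [h1, Matrix.mul_nonsing_inv _ hAdet, Matrix.nonsing_inv_mul _ hBdet,
      mul_one, one_mul, sub_sub_cancel]
  have hmid : ∀ (M N : Matrix Λ Λ ℂ) (w : Λ) (p q : Λ),
      (M * Matrix.single w w (1 : ℂ) * N) p q = M p w * N w q := by
    intro M N w p q
    rw [mul_assoc]
    simp [Matrix.mul_apply, Matrix.single, ite_and, Finset.mul_sum]
  have hexp : ∀ p q : Λ, A⁻¹ p q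
      = B⁻¹ p q - ((vx : ℂ) * (B⁻¹ p x * A⁻¹ x q) + (vy : ℂ) * (B⁻¹ p y * A⁻¹ y q)) := by
    intro p q
    have := congrFun (congrFun key p) q
    rw [hAB] at this
    have h2 : B⁻¹ * ((vx : ℂ) • Matrix.single x x 1
        + (vy : ℂ) • Matrix.single y y 1) * A⁻¹
        = (vx : ℂ) • (B⁻¹ * Matrix.single x x 1 * A⁻¹)
          + (vy : ℂ) • (B⁻¹ * Matrix.single y y 1 * A⁻¹) := by
      rw [mul_add, add_mul, Matrix.mul_smul, Matrix.smul_mul, Matrix.mul_smul,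
        Matrix.smul_mul]
    rw [h2] at this
    simpa [Matrix.sub_apply, Matrix.add_apply, Matrix.smul_apply, hmid, smul_eq_mul]
      using this
  set D : Matrix (Fin 2) (Fin 2) ℂ := Matrix.diagonal ![(vx : ℂ), (vy : ℂ)] with hD
  have hmat : g = Ghat - Ghat * D * g := by
    ext a b
    have hexp' := hexp (![x, y] a) (![x, y] b)
    have hg0 : A⁻¹ x (![x, y] b) = g 0 b := by rw [hg]; rfl
    have hg1 : A⁻¹ y (![x, y] b) = g 1 b := by rw [hg]; rfl
    have hG0 : B⁻¹ (![x, y] a) x = Ghat a 0 := by rw [hGhat]; rfl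
    have hG1 : B⁻¹ (![x, y] a) y = Ghat a 1 := by rw [hGhat]; rfl
    have hgl : g a b = A⁻¹ (![x, y] a) (![x, y] b) := by rw [hg]; rfl
    have hGl : Ghat a b = B⁻¹ (![x, y] a) (![x, y] b) := by rw [hGhat]; rfl
    rw [Matrix.sub_apply, hgl, hGl, hexp', hg0, hg1, hG0, hG1]
    congr 1
    rw [mul_assoc]
    simp [Matrix.mul_apply, hD, Fin.sum_univ_two, Matrix.diagonal, Matrix.mul_apply]
    ring
  have hright : (D + Ghat⁻¹) * g = 1 := by
    have h3 : (1 + Ghat * D) * g = Ghat := by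
      rw [eq_sub_iff_add_eq] at hmat
      rw [add_mul, one_mul, add_comm]
      rw [add_comm] at hmat
      exact hmat
    have h4 : (D + Ghat⁻¹) = Ghat⁻¹ * (1 + Ghat * D) := by
      rw [mul_add, mul_one, ← mul_assoc, Matrix.nonsing_inv_mul _ hinv, one_mul, add_comm]
    rw [h4, mul_assoc, h3, Matrix.nonsing_inv_mul _ hinv]
  exact (Matrix.inv_eq_right_inv hright).symm
end
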